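/- Let A be a Boolean algebra, S a family of subsets of A, and F a Q-filter of A for S. Then F is an ultrafilter-like prime filter in the sense that for every x ∈ A, exactly one of x ∈ F and ¬x ∈ F holds; consequently, for every subset X ⊆ A whose supremum s = ⨆X exists in A and such that the set {¬x | x ∈ X} belongs to S, one has s ∈ F if and only if there exists x ∈ X with x ∈ F. -/

import Mathlib

variable {α : Type*}

/-- A filter of a Boolean algebra: a nonempty, upward-closed subset
closed under binary meets. -/
def IsGoodFilter [BooleanAlgebra α] (F : Set α) : Prop :=
  F.Nonempty ∧ (∀ x y : α, x ∈ F → x ≤ y → y ∈ F) ∧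
    (∀ x y : α, x ∈ F → y ∈ F → x ⊓ y ∈ F)

/-- A prime filter: a proper filter (⊥ ∉ F) such that x ⊔ y ∈ F implies
x ∈ F or y ∈ F. -/
def IsPrimeFilter [BooleanAlgebra α] (F : Set α) : Prop :=
  IsGoodFilter F ∧ (⊥ : α) ∉ F ∧ ∀ x y : α, x ⊔ y ∈ F → x ∈ F ∨ y ∈ F

/-- A Q-filter for a family `S` of subsets: a prime filter such that for every
`X ∈ S` whose infimum exists and with `X ⊆ F`, the infimum belongs to `F`. -/
def IsQFilter [BooleanAlgebra α] (S : Set (Set α)) (F : Set α) : Prop :=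
  IsPrimeFilter F ∧ ∀ X ∈ S, ∀ m : α, IsGLB X m → X ⊆ F → m ∈ F

/-- The set of all Q-filters for `S`. -/
abbrev QFilt [BooleanAlgebra α] (S : Set (Set α)) := {F : Set α // IsQFilter S F}

/-- The Stone-style map `f x = {F ∈ Q_S(A) | x ∈ F}`. -/
def fset [BooleanAlgebra α] (S : Set (Set α)) (x : α) : Set (QFilt S) :=
  {F | x ∈ F.1}

/-- The neighborhood map of the frame `J_S(A)`: the upward closure (under ⊆)
of the family `{f y | □y ∈ F}`. -/
def nbhd [BooleanAlgebra α] (box : α → α) (S : Set (Set α)) (F : QFilt S) :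
    Set (Set (QFilt S)) :=
  {X | ∃ y : α, box y ∈ F.1 ∧ fset S y ⊆ X}

/-- The neighborhood map of the frame `J̄_S(A)`: the family `{f y | □y ∈ F}`,
without taking upward closure. -/
def nbhdBar [BooleanAlgebra α] (box : α → α) (S : Set (Set α)) (F : QFilt S) :
    Set (Set (QFilt S)) :=
  {X | ∃ y : α, box y ∈ F.1 ∧ fset S y = X}

/-- A Q-filter contains exactly one of `x`, `xᶜ` for each `x`; consequently, for
any `X` whose supremum `s` exists and with `{xᶜ | x ∈ X} ∈ S`, `s ∈ F` iff some
element of `X` is in `F`. -/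
theorem qfilter_ultra_and_sup [BooleanAlgebra α] (S : Set (Set α)) (F : Set α)
    (hF : IsQFilter S F) :
    (∀ x : α, Xor' (x ∈ F) (xᶜ ∈ F)) ∧
    (∀ X : Set α, ∀ s : α, IsLUB X s → (Compl.compl '' X) ∈ S →
      (s ∈ F ↔ ∃ x ∈ X, x ∈ F)) := by
  obtain ⟨⟨⟨⟨a, ha⟩, hup, hmeet⟩, hbot, hprime⟩, hQ⟩ := hF
  have htop : (⊤ : α) ∈ F := hup a ⊤ ha le_top
  have hultra : ∀ x : α, Xor' (x ∈ F) (xᶜ ∈ F) := by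
    intro x
    have hor : x ∈ F ∨ xᶜ ∈ F := by
      apply hprime
      rw [sup_compl_eq_top]; exact htop
    have hnboth : ¬(x ∈ F ∧ xᶜ ∈ F) := by
      rintro ⟨h1, h2⟩
      exact hbot (by simpa using hmeet x xᶜ h1 h2)
    rcases hor with h | h
    · exact Or.inl ⟨h, fun h' => hnboth ⟨h, h'⟩⟩
    · exact Or.inr ⟨h, fun h' => hnboth ⟨h', h⟩⟩
  refine ⟨hultra, fun X s hs hS => ?_⟩
  constructor
  · intro hsF
    by_contra hnone
    push_neg at hnone
    have hsub : Compl.compl '' X ⊆ F := by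
      rintro _ ⟨x, hx, rfl⟩
      rcases hultra x with ⟨h1, _⟩ | ⟨h2, _⟩
      · exact absurd h1 (hnone x hx)
      · exact h2
    have hglb : IsGLB (Compl.compl '' X) sᶜ := by
      constructor
      · rintro _ ⟨x, hx, rfl⟩
        exact compl_le_compl (hs.1 hx)
      · intro b hb
        have : s ≤ bᶜ := hs.2 fun x hx => by
          have := hb ⟨x, hx, rfl⟩
          exact le_compl_iff_le_compl.mp (hb ⟨x, hx, rfl⟩)
        exact le_compl_iff_le_compl.mp this
    have : sᶜ ∈ F := hQ _ hS _ hglb hsub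
    exact hbot (by simpa using hmeet s sᶜ hsF this)
  · rintro ⟨x, hx, hxF⟩
    exact hup x s hxF (hs.1 hx)
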